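/- Let I be a finite nonempty index set, d ≥ 1, and for each i ∈ I let P_i be a set of cardinality d; assume the P_i may overlap (they are subsets of a common ambient set). Suppose there is a family of bijections l_{ji} : P_i → P_j for all i, j ∈ I with l_{ij} = l_{ji}⁻¹, l_{ii} = id, and l_{ji} restricted to P_i ∩ P_j equal to the identity, satisfying the flatness condition that for every finite cycle i₀, i₁, …, i_{n−1}, i₀ in I the composite l_{i₀ i_{n−1}} ∘ ⋯ ∘ l_{i₂ i₁} ∘ l_{i₁ i₀} is the identity on P_{i₀}. Then there exists a family of bijections ζ_i : P_i → Fin d such that ζ_j ∘ l_{ji} = ζ_i for all i, j ∈ I; in particular ζ_i and ζ_j agree on P_i ∩ P_j. Conversely, given any family of bijections ζ_i : P_i → Fin d that pairwise agree on overlaps P_i ∩ P_j, the bijections l_{ji} := ζ_j⁻¹ ∘ ζ_i form such a flat family restricting to the identity on overlaps. -/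

import Mathlib

/-- One step of transport along a context connection: move the current point
(living in some context `P i`) to the context `P j`. -/
def connectionStep {X I : Type*} {P : I → Set X}
    (l : ∀ i j : I, ↥(P i) → ↥(P j)) :
    (Σ i : I, ↥(P i)) → I → Σ j : I, ↥(P j) :=
  fun p j => ⟨j, l p.1 j p.2⟩

/-- A context connection is flat if transporting around any cycle
`i → i₁ → ⋯ → iₙ₋₁ → i` is the identity on `P i`. -/
def ConnectionFlat {X I : Type*} {P : I → Set X}
    (l : ∀ i j : I, ↥(P i) → ↥(P j)) : Prop :=
  ∀ (i : I) (x : ↥(P i)) (L : List I),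
    (L ++ [i]).foldl (connectionStep l) ⟨i, x⟩ = ⟨i, x⟩

theorem flat_context_connection_iff_d_colouring
    {X I : Type*} [Finite I] [Nonempty I] (P : I → Set X) (d : ℕ) (hd : 1 ≤ d)
    (hcard : ∀ i, Nat.card ↥(P i) = d) :
    (∀ l : ∀ i j : I, ↥(P i) → ↥(P j),
      (∀ i j x, l j i (l i j x) = x) →
      (∀ i x, l i i x = x) →
      (∀ (i j : I) (x : ↥(P i)), (x : X) ∈ P j → ((l i j x : X) = (x : X))) →
      ConnectionFlat l →
      ∃ ζ : ∀ i : I, ↥(P i) ≃ Fin d,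
        (∀ (i j : I) (x : ↥(P i)), ζ j (l i j x) = ζ i x) ∧
        (∀ (i j : I) (x : ↥(P i)) (y : ↥(P j)), (x : X) = (y : X) → ζ i x = ζ j y)) ∧
    (∀ ζ : ∀ i : I, ↥(P i) ≃ Fin d,
      (∀ (i j : I) (x : ↥(P i)) (y : ↥(P j)), (x : X) = (y : X) → ζ i x = ζ j y) →
      ((∀ (i j : I) (x : ↥(P i)),
          (fun i j (x : ↥(P i)) => (ζ j).symm (ζ i x)) j i
            ((fun i j (x : ↥(P i)) => (ζ j).symm (ζ i x)) i j x) = x) ∧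
        (∀ (i : I) (x : ↥(P i)),
          (fun i j (x : ↥(P i)) => (ζ j).symm (ζ i x)) i i x = x) ∧
        (∀ (i j : I) (x : ↥(P i)), (x : X) ∈ P j →
          (((fun i j (x : ↥(P i)) => (ζ j).symm (ζ i x)) i j x : X) = (x : X))) ∧
        ConnectionFlat (fun i j (x : ↥(P i)) => (ζ j).symm (ζ i x)))) := by
  constructor
  · intro l hinv hid hover hflat
    obtain ⟨i₀⟩ := ‹Nonempty I›
    have hfin : Finite ↥(P i₀) := Nat.finite_of_card_ne_zero (by rw [hcard]; omega)
    have e : ↥(P i₀) ≃ Fin d := by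
      have := Finite.equivFin ↥(P i₀)
      rwa [hcard] at this
    -- cocycle: l j k (l i j x) = l i k x
    have cocycle : ∀ (i j k : I) (x : ↥(P i)), l j k (l i j x) = l i k x := by
      intro i j k x
      have h3 := hflat i x [j, k]
      simp only [List.cons_append, List.nil_append, List.foldl, connectionStep] at h3
      have h3' : l k i (l j k (l i j x)) = x := by
        have := (Sigma.mk.inj_iff.mp h3).2
        exact eq_of_heq this
      calc l j k (l i j x) = l i k (l k i (l j k (l i j x))) := (hinv k i _).symm
        _ = l i k x := by rw [h3']
    have linv : ∀ i, Function.Bijective (l i i₀) := by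
      intro i
      exact Function.bijective_iff_has_inverse.mpr ⟨l i₀ i, fun x => hinv i i₀ x, fun y => hinv i₀ i y⟩
    refine ⟨fun i => (Equiv.ofBijective _ (linv i)).trans e, ?_, ?_⟩
    · intro i j x
      simp only [Equiv.trans_apply, Equiv.ofBijective_apply]
      rw [cocycle i j i₀ x]
    · intro i j x y hxy
      have hxj : (x : X) ∈ P j := hxy ▸ y.2
      have hlij : l i j x = y := Subtype.ext ((hover i j x hxj).trans hxy)
      have := congrArg (fun z => ((Equiv.ofBijective _ (linv j)).trans e) z) hlij
      simp only [Equiv.trans_apply, Equiv.ofBijective_apply] at this ⊢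
      rw [← this, cocycle i j i₀ x]
  · intro ζ hagree
    refine ⟨?_, ?_, ?_, ?_⟩
    · intro i j x; simp
    · intro i x; simp
    · intro i j x hx
      have := hagree i j x ⟨(x : X), hx⟩ rfl
      simp [this]
    · intro i x L
      have key : ∀ (L : List I) (p : Σ i : I, ↥(P i)),
          (L ++ [i]).foldl (connectionStep (fun i j (x : ↥(P i)) => (ζ j).symm (ζ i x))) p
            = ⟨i, (ζ i).symm (ζ p.1 p.2)⟩ := by
        intro L
        induction L with
        | nil => intro p; rfl
        | cons a L ih =>
          intro p
          simp only [List.cons_append, List.foldl_cons]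
          rw [ih]
          simp [connectionStep]
          exact (ζ a).apply_symm_apply _
      rw [key L ⟨i, x⟩]
      simp
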